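/- Let A, B ∈ SL(2, ℂ). Then there exists a one-dimensional subspace of ℂ² invariant under both A and B (equivalently, A and B have a common eigenvector, i.e., the representation of the rank-two free group sending the generators to A and B is reducible) if and only if tr(ABA⁻¹B⁻¹) = 2. -/

import Mathlib

/-- The trace of an element of `SL(2, ℂ)`. -/
noncomputable def trSL (M : Matrix.SpecialLinearGroup (Fin 2) ℂ) : ℂ :=
  Matrix.trace (M : Matrix (Fin 2) (Fin 2) ℂ)

/-- Any binary quadratic form over `ℂ` has a nontrivial zero. -/
private lemma quad_root (c e f : ℂ) :
    ∃ x y : ℂ, ¬(x = 0 ∧ y = 0) ∧ c * x ^ 2 + e * (x * y) + f * y ^ 2 = 0 := by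
  rcases eq_or_ne c 0 with hc | hc
  · exact ⟨1, 0, fun h => one_ne_zero h.1, by simp [hc]⟩
  · obtain ⟨s, hs⟩ := IsAlgClosed.exists_pow_nat_eq (e ^ 2 - 4 * c * f) (n := 2) two_pos
    refine ⟨-e + s, 2 * c, fun h => hc ?_, by linear_combination c * hs⟩
    have := h.2
    simpa using this

/-- If the resultant of two binary quadratic forms vanishes, they have a
common nontrivial zero. -/
private lemma key_exists (c1 e1 f1 c2 e2 f2 : ℂ)
    (hres : (c1 * f2 - c2 * f1) ^ 2 - (c1 * e2 - c2 * e1) * (e1 * f2 - e2 * f1) = 0) :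
    ∃ x y : ℂ, ¬(x = 0 ∧ y = 0) ∧ c1 * x ^ 2 + e1 * (x * y) + f1 * y ^ 2 = 0 ∧
      c2 * x ^ 2 + e2 * (x * y) + f2 * y ^ 2 = 0 := by
  rcases eq_or_ne c1 0 with hc | hc
  · rcases eq_or_ne e1 0 with he | he
    · rcases eq_or_ne f1 0 with hf | hf
      · obtain ⟨x, y, hxy, hroot⟩ := quad_root c2 e2 f2
        exact ⟨x, y, hxy, by simp [hc, he, hf], hroot⟩
      · have h2 : (c2 * f1) ^ 2 = 0 := by
          linear_combination hres + (-f1 * e2 ^ 2 + 2 * f1 * c2 * f2 + e1 * e2 * f2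
            - c1 * f2 ^ 2) * hc + (f1 * c2 * e2 - e1 * c2 * f2) * he
        have hc2 : c2 = 0 := by
          rcases mul_eq_zero.mp (pow_eq_zero_iff two_ne_zero |>.mp h2) with h | h
          · exact h
          · exact absurd h hf
        exact ⟨1, 0, fun h => one_ne_zero h.1, by simp [hc, he], by simp [hc2]⟩
    · rcases eq_or_ne c2 0 with hc2 | hc2
      · exact ⟨1, 0, fun h => one_ne_zero h.1, by simp [hc], by simp [hc2]⟩
      · have hkey : c2 * (c2 * (-f1) ^ 2 + e2 * (-f1 * e1) + f2 * e1 ^ 2) = 0 := by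
          linear_combination hres + (-f1 * e2 ^ 2 + 2 * f1 * c2 * f2 + e1 * e2 * f2
            - c1 * f2 ^ 2) * hc
        have h0 : c2 * (-f1) ^ 2 + e2 * (-f1 * e1) + f2 * e1 ^ 2 = 0 := by
          rcases mul_eq_zero.mp hkey with h | h
          · exact absurd h hc2
          · exact h
        exact ⟨-f1, e1, fun h => he h.2, by linear_combination f1 ^ 2 * hc, by linear_combination h0⟩
  · obtain ⟨s, hs⟩ := IsAlgClosed.exists_pow_nat_eq (e1 ^ 2 - 4 * c1 * f1) (n := 2) two_pos
    have hprod : (c2 * (-e1 + s) ^ 2 + e2 * ((-e1 + s) * (2 * c1)) + f2 * (2 * c1) ^ 2) *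
        (c2 * (-e1 - s) ^ 2 + e2 * ((-e1 - s) * (2 * c1)) + f2 * (2 * c1) ^ 2) = 0 := by
      linear_combination (c2 ^ 2 * s ^ 2 - e1 ^ 2 * c2 ^ 2 - 4 * c1 * f1 * c2 ^ 2
        + 4 * c1 * e1 * c2 * e2 - 4 * c1 ^ 2 * e2 ^ 2 + 8 * c1 ^ 2 * c2 * f2) * hs
        + (16 * c1 ^ 2) * hres
    have h2c : (2 : ℂ) * c1 ≠ 0 := by
      intro h
      exact hc (by simpa using h)
    rcases mul_eq_zero.mp hprod with h | h
    · exact ⟨-e1 + s, 2 * c1, fun hh => h2c hh.2, by linear_combination c1 * hs,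
        by linear_combination h⟩
    · exact ⟨-e1 - s, 2 * c1, fun hh => h2c hh.2, by linear_combination c1 * hs,
        by linear_combination h⟩

/-- If two binary quadratic forms have a common nontrivial zero, their
resultant vanishes. -/
private lemma key_forward (c1 e1 f1 c2 e2 f2 x y : ℂ) (hxy : ¬(x = 0 ∧ y = 0))
    (h1 : c1 * x ^ 2 + e1 * (x * y) + f1 * y ^ 2 = 0)
    (h2 : c2 * x ^ 2 + e2 * (x * y) + f2 * y ^ 2 = 0) :
    (c1 * f2 - c2 * f1) ^ 2 - (c1 * e2 - c2 * e1) * (e1 * f2 - e2 * f1) = 0 := by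
  rcases eq_or_ne x 0 with hx | hx
  · have hy : y ≠ 0 := fun h => hxy ⟨hx, h⟩
    have hf1 : f1 = 0 := by
      have h := h1
      rw [hx] at h
      simp at h
      rcases h with h' | h'
      · exact h'
      · exact absurd h' hy
    have hf2 : f2 = 0 := by
      have h := h2
      rw [hx] at h
      simp at h
      rcases h with h' | h'
      · exact h'
      · exact absurd h' hy
    rw [hf1, hf2]
    ring
  · have ht1 : c1 + e1 * (y / x) + f1 * (y / x) ^ 2 = 0 := by
      field_simp
      linear_combination h1
    have ht2 : c2 + e2 * (y / x) + f2 * (y / x) ^ 2 = 0 := by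
      field_simp
      linear_combination h2
    linear_combination
      (f2 * (f1 * e2 - e1 * f2) * (y / x)
        + (f1 * e2 ^ 2 - f1 * f2 * c2 - e1 * f2 * e2 + c1 * f2 ^ 2)) * ht1
      + (-(f1 * (f1 * e2 - e1 * f2)) * (y / x)
        + (f1 ^ 2 * c2 - f1 * e1 * e2 + e1 ^ 2 * f2 - f1 * c1 * f2)) * ht2

/-- A nonzero vector parallel to its image is an eigenvector: from the
vanishing of the "parallelism" quadratic we recover an eigenvalue. -/
private lemma parallel (a b c d x y : ℂ)
    (hq : c * x ^ 2 + (d - a) * (x * y) + (-b) * y ^ 2 = 0) :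
    ∃ e : ℂ, a * x + b * y = e * x ∧ c * x + d * y = e * y := by
  rcases eq_or_ne x 0 with hx | hx
  · rcases eq_or_ne y 0 with hy | hy
    · exact ⟨0, by rw [hx, hy]; ring, by rw [hx, hy]; ring⟩
    · have hb : b = 0 := by
        have h := hq
        rw [hx] at h
        simp at h
        rcases h with h' | h'
        · exact h'
        · exact absurd h' hy
      exact ⟨d, by rw [hx, hb]; ring, by rw [hx]; ring⟩
  · refine ⟨(a * x + b * y) / x, by field_simp, ?_⟩
    field_simp
    linear_combination hq

/-- `A, B ∈ SL(2,ℂ)` have a common invariant line in `ℂ²`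
(i.e. the representation they generate is reducible) if and only if
`tr(ABA⁻¹B⁻¹) = 2`. -/
theorem reducible_iff_commutator_trace_eq_two (A B : Matrix.SpecialLinearGroup (Fin 2) ℂ) :
    (∃ V : Submodule ℂ (Fin 2 → ℂ), Module.finrank ℂ V = 1 ∧
      (∀ v ∈ V, (A : Matrix (Fin 2) (Fin 2) ℂ).mulVec v ∈ V) ∧
      (∀ v ∈ V, (B : Matrix (Fin 2) (Fin 2) ℂ).mulVec v ∈ V)) ↔
    trSL (A * B * A⁻¹ * B⁻¹) = 2 := by
  have hdA : (A : Matrix (Fin 2) (Fin 2) ℂ) 0 0 * (A : Matrix (Fin 2) (Fin 2) ℂ) 1 1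
      - (A : Matrix (Fin 2) (Fin 2) ℂ) 0 1 * (A : Matrix (Fin 2) (Fin 2) ℂ) 1 0 = 1 := by
    rw [← Matrix.det_fin_two]; exact A.2
  have hdB : (B : Matrix (Fin 2) (Fin 2) ℂ) 0 0 * (B : Matrix (Fin 2) (Fin 2) ℂ) 1 1
      - (B : Matrix (Fin 2) (Fin 2) ℂ) 0 1 * (B : Matrix (Fin 2) (Fin 2) ℂ) 1 0 = 1 := by
    rw [← Matrix.det_fin_two]; exact B.2
  set a := (A : Matrix (Fin 2) (Fin 2) ℂ) 0 0 with ha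
  set b := (A : Matrix (Fin 2) (Fin 2) ℂ) 0 1 with hb
  set c := (A : Matrix (Fin 2) (Fin 2) ℂ) 1 0 with hc
  set d := (A : Matrix (Fin 2) (Fin 2) ℂ) 1 1 with hd
  set p := (B : Matrix (Fin 2) (Fin 2) ℂ) 0 0 with hp
  set q := (B : Matrix (Fin 2) (Fin 2) ℂ) 0 1 with hq
  set r := (B : Matrix (Fin 2) (Fin 2) ℂ) 1 0 with hr
  set s := (B : Matrix (Fin 2) (Fin 2) ℂ) 1 1 with hs
  -- the resultant of the two parallelism quadratics
  set Res : ℂ := (c * (-q) - r * (-b)) ^ 2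
      - (c * (s - p) - r * (d - a)) * ((d - a) * (-q) - (s - p) * (-b)) with hRes
  have htr : trSL (A * B * A⁻¹ * B⁻¹) = 2 + Res := by
    simp only [trSL, Matrix.SpecialLinearGroup.coe_mul, Matrix.SpecialLinearGroup.coe_inv,
      Matrix.adjugate_fin_two, Matrix.trace_fin_two, Matrix.mul_apply, Fin.sum_univ_two,
      Matrix.of_apply, Matrix.cons_val', Matrix.cons_val_zero, Matrix.cons_val_one,
      Matrix.head_cons, Matrix.empty_val', Matrix.cons_val_fin_one, Matrix.head_fin_const]
    rw [hRes]
    linear_combination (2 * (p * s - q * r)) * hdA + 2 * hdB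
  constructor
  · rintro ⟨V, hdim, hAV, hBV⟩
    obtain ⟨v, hv0, hv⟩ := finrank_eq_one_iff'.mp hdim
    have hw0 : (v : Fin 2 → ℂ) ≠ 0 := fun h => hv0 (Subtype.coe_injective h)
    set x := (v : Fin 2 → ℂ) 0 with hx
    set y := (v : Fin 2 → ℂ) 1 with hy
    have hxy : ¬(x = 0 ∧ y = 0) := by
      rintro ⟨h0, h1⟩
      apply hw0
      funext i
      fin_cases i
      · exact h0
      · exact h1
    obtain ⟨cA, hcA⟩ := hv ⟨(A : Matrix (Fin 2) (Fin 2) ℂ).mulVec v, hAV v v.2⟩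
    obtain ⟨cB, hcB⟩ := hv ⟨(B : Matrix (Fin 2) (Fin 2) ℂ).mulVec v, hBV v v.2⟩
    have hcA' : cA • (v : Fin 2 → ℂ) = (A : Matrix (Fin 2) (Fin 2) ℂ).mulVec v :=
      congrArg Subtype.val hcA
    have hcB' : cB • (v : Fin 2 → ℂ) = (B : Matrix (Fin 2) (Fin 2) ℂ).mulVec v :=
      congrArg Subtype.val hcB
    have hA0 : a * x + b * y = cA * x := by
      have := congrFun hcA' 0
      simp [Matrix.mulVec, dotProduct, Fin.sum_univ_two] at this
      rw [← this]
    have hA1 : c * x + d * y = cA * y := by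
      have := congrFun hcA' 1
      simp [Matrix.mulVec, dotProduct, Fin.sum_univ_two] at this
      rw [← this]
    have hB0 : p * x + q * y = cB * x := by
      have := congrFun hcB' 0
      simp [Matrix.mulVec, dotProduct, Fin.sum_univ_two] at this
      rw [← this]
    have hB1 : r * x + s * y = cB * y := by
      have := congrFun hcB' 1
      simp [Matrix.mulVec, dotProduct, Fin.sum_univ_two] at this
      rw [← this]
    have hq1 : c * x ^ 2 + (d - a) * (x * y) + (-b) * y ^ 2 = 0 := by
      linear_combination x * hA1 - y * hA0
    have hq2 : r * x ^ 2 + (s - p) * (x * y) + (-q) * y ^ 2 = 0 := by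
      linear_combination x * hB1 - y * hB0
    have hres0 : Res = 0 := by
      rw [hRes]
      exact key_forward c (d - a) (-b) r (s - p) (-q) x y hxy hq1 hq2
    rw [htr, hres0, add_zero]
  · intro htr2
    have hres0 : Res = 0 := by linear_combination htr2 - htr
    obtain ⟨x, y, hxy, hq1, hq2⟩ := key_exists c (d - a) (-b) r (s - p) (-q)
      (by rw [hRes] at hres0; linear_combination hres0)
    obtain ⟨eA, heA0, heA1⟩ := parallel a b c d x y hq1
    obtain ⟨eB, heB0, heB1⟩ := parallel p q r s x y hq2
    set v : Fin 2 → ℂ := ![x, y] with hv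
    have hv0 : v ≠ 0 := by
      intro h
      apply hxy
      constructor
      · have := congrFun h 0; simpa [hv] using this
      · have := congrFun h 1; simpa [hv] using this
    have hAv : (A : Matrix (Fin 2) (Fin 2) ℂ).mulVec v = eA • v := by
      funext i
      fin_cases i
      · simpa [hv, Matrix.mulVec, dotProduct, Fin.sum_univ_two, mul_comm] using heA0
      · simpa [hv, Matrix.mulVec, dotProduct, Fin.sum_univ_two, mul_comm] using heA1
    have hBv : (B : Matrix (Fin 2) (Fin 2) ℂ).mulVec v = eB • v := by
      funext i
      fin_cases i
      · simpa [hv, Matrix.mulVec, dotProduct, Fin.sum_univ_two, mul_comm] using heB0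
      · simpa [hv, Matrix.mulVec, dotProduct, Fin.sum_univ_two, mul_comm] using heB1
    refine ⟨Submodule.span ℂ {v}, finrank_span_singleton hv0, ?_, ?_⟩
    · intro w hw
      obtain ⟨t, rfl⟩ := Submodule.mem_span_singleton.mp hw
      rw [Matrix.mulVec_smul, hAv, smul_smul]
      exact Submodule.smul_mem _ _ (Submodule.mem_span_singleton_self v)
    · intro w hw
      obtain ⟨t, rfl⟩ := Submodule.mem_span_singleton.mp hw
      rw [Matrix.mulVec_smul, hBv, smul_smul]
      exact Submodule.smul_mem _ _ (Submodule.mem_span_singleton_self v)
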